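/- Let V be a complex vector space with a Virasoro representation of central charge c = −22/5 and a Shapovalov-compatible bilinear form B, and let w ∈ V be a (2,5)-model lowest-weight vector: L_n w = 0 for all n ≤ −1, L₀w = −(1/5)·w, and the null-vector relations (2L₂ − 5L₁L₁)w = 0 and (L₃ − 5L₂L₁)w = 0 hold. Then the vector ψ := (52·L₄ − 25·L₁L₃)w is quasi-primary, i.e. L₋₁ψ = 0, and B(ψ, ψ) = (5928/5)·B(w, w). -/
import Mathlib


/-- for a `(2,5)`-model lowest-weight vector `w` (weight `−1/5`,
null relations `(2L₂ − 5L₁L₁)w = 0` and `(L₃ − 5L₂L₁)w = 0`), the vector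
`ψ = (52L₄ − 25L₁L₃)w` is quasi-primary and `B(ψ, ψ) = (5928/5)·B(w, w)`. -/
theorem quasiprimary_weight_four_W_norm
    (V : Type*) [AddCommGroup V] [Module ℂ V]
    (c : ℂ) (hc : c = -22/5) (L : ℤ → Module.End ℂ V)
    (hL : ∀ (n m : ℤ) (x : V), L n (L m x) - L m (L n x) =
      ((m : ℂ) - (n : ℂ)) • L (m + n) x +
        (if m + n = 0 then c / 12 * (m : ℂ) * ((m : ℂ) ^ 2 - 1) else 0) • x)
    (B : V →ₗ[ℂ] V →ₗ[ℂ] ℂ)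
    (hB : ∀ (n : ℤ) (x y : V), B (L n x) y = B x (L (-n) y))
    (w : V) (hw : ∀ n : ℤ, n ≤ -1 → L n w = 0)
    (hw0 : L 0 w = (-(1/5) : ℂ) • w)
    (hnull1 : (2 : ℂ) • L 2 w - (5 : ℂ) • L 1 (L 1 w) = 0)
    (hnull2 : L 3 w - (5 : ℂ) • L 2 (L 1 w) = 0)
    (ψ : V) (hψ : ψ = (52 : ℂ) • L 4 w - (25 : ℂ) • L 1 (L 3 w)) :
    L (-1) ψ = 0 ∧ B ψ ψ = (5928/5 : ℂ) * B w w := by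
  have hwm1 : L (-1) w = 0 := hw (-1) (by norm_num)
  have hwm3 : L (-3) w = 0 := hw (-3) (by norm_num)
  have hwm4 : L (-4) w = 0 := hw (-4) (by norm_num)
  -- L 2 w in terms of L1 L1 w
  have hL2 : L 2 w = (5/2 : ℂ) • L 1 (L 1 w) := by
    linear_combination (norm := module) (1/2 : ℂ) • hnull1
  -- L 2 (L 1 w)
  have hL21 : L 2 (L 1 w) = (5/2 : ℂ) • L 1 (L 1 (L 1 w)) - L 3 w := by
    have h := hL 2 1 w
    norm_num at h
    have h2 : L 1 (L 2 w) = (5/2 : ℂ) • L 1 (L 1 (L 1 w)) := by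
      rw [hL2, map_smul]
    linear_combination (norm := module) h + h2
  -- L 3 w
  have hL3 : L 3 w = (25/12 : ℂ) • L 1 (L 1 (L 1 w)) := by
    have h2 : (5:ℂ) • L 2 (L 1 w) = (25/2 : ℂ) • L 1 (L 1 (L 1 w)) - (5:ℂ) • L 3 w := by
      rw [hL21]; module
    linear_combination (norm := module) (1/6 : ℂ) • hnull2 + (1/6 : ℂ) • h2
  -- quasi-primary computation
  have e1 : L (-1) (L 4 w) = (5 : ℂ) • L 3 w := by
    have h := hL (-1) 4 w
    rw [hwm1, map_zero] at h
    norm_num at h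
    linear_combination (norm := module) h
  have e2 : L (-1) (L 3 w) = (4 : ℂ) • L 2 w := by
    have h := hL (-1) 3 w
    rw [hwm1, map_zero] at h
    norm_num at h
    linear_combination (norm := module) h
  have e3 : L 0 (L 3 w) = (14/5 : ℂ) • L 3 w := by
    have h := hL 0 3 w
    norm_num at h
    have h2 : L 3 (L 0 w) = (-(1/5) : ℂ) • L 3 w := by rw [hw0, map_smul]
    linear_combination (norm := module) h + h2
  have e4 : L (-1) (L 1 (L 3 w)) = (10 : ℂ) • L 1 (L 1 (L 1 w)) + (28/5 : ℂ) • L 3 w := by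
    have h := hL (-1) 1 (L 3 w)
    norm_num at h
    have h2 : L 1 (L (-1) (L 3 w)) = (10 : ℂ) • L 1 (L 1 (L 1 w)) := by
      rw [e2, map_smul, hL2, map_smul]; module
    linear_combination (norm := module) h + h2 + (2:ℂ) • e3
  have hqp : L (-1) ψ = 0 := by
    rw [hψ, map_sub, map_smul, map_smul, e1, e4, hL3]
    module
  refine ⟨hqp, ?_⟩
  -- L (-4) ψ
  have f1 : L (-4) (L 4 w) = (-118/5 : ℂ) • w := by
    have h := hL (-4) 4 w
    rw [hwm4, map_zero, hc] at h
    norm_num at h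
    linear_combination (norm := module) h + (8:ℂ) • hw0
  have f2 : L (-3) (L 3 w) = (-10 : ℂ) • w := by
    have h := hL (-3) 3 w
    rw [hwm3, map_zero, hc] at h
    norm_num at h
    linear_combination (norm := module) h + (6:ℂ) • hw0
  have f3 : L (-4) (L 3 w) = 0 := by
    have h := hL (-4) 3 w
    rw [hwm4, map_zero] at h
    norm_num at h
    rw [hwm1] at h
    linear_combination (norm := module) h
  have f4 : L (-4) (L 1 (L 3 w)) = (-50 : ℂ) • w := by
    have h := hL (-4) 1 (L 3 w)
    norm_num at h
    have h2 : L 1 (L (-4) (L 3 w)) = 0 := by rw [f3, map_zero]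
    linear_combination (norm := module) h + h2 + (5:ℂ) • f2
  have f5 : L (-4) ψ = (114/5 : ℂ) • w := by
    rw [hψ, map_sub, map_smul, map_smul, f1, f4]
    module
  calc B ψ ψ = (52 : ℂ) * B (L 4 w) ψ - (25 : ℂ) * B (L 1 (L 3 w)) ψ := by
        nth_rewrite 1 [hψ]
        simp only [map_sub, map_smul, LinearMap.sub_apply, LinearMap.smul_apply, smul_eq_mul]
    _ = (52 : ℂ) * B w (L (-4) ψ) - (25 : ℂ) * B (L 3 w) (L (-1) ψ) := by
        rw [hB 4 w ψ, hB 1 (L 3 w) ψ]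
    _ = (5928/5 : ℂ) * B w w := by
        rw [f5, hqp, map_smul, map_zero]
        simp [smul_eq_mul]; ring
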